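/- Let G be a finite tree on at least 2 vertices and let φ be an eigenvector of the Laplacian matrix L = D − A with eigenvalue λ₂(G), normalized so that Σ_{v ∈ V} φ(v)² = 1. Then Σ_{v ∈ V} |φ(v)| ≥ diam(G)^{1/2} / 4. -/

import Mathlib

open Matrix

/-- `(l, φ)` is an eigenpair of the (combinatorial) graph Laplacian `L = D - A`. -/
def SimpleGraph.IsLapEigenpair {V : Type*} [Fintype V] [DecidableEq V]
    (G : SimpleGraph V) [DecidableRel G.Adj] (l : ℝ) (φ : V → ℝ) : Prop :=
  φ ≠ 0 ∧ G.lapMatrix ℝ *ᵥ φ = l • φ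

/-- `l` is the second-smallest eigenvalue `λ₂(G)` of the Laplacian of a connected graph,
i.e. its smallest positive eigenvalue. -/
def SimpleGraph.IsSecondLapEigenvalue {V : Type*} [Fintype V] [DecidableEq V]
    (G : SimpleGraph V) [DecidableRel G.Adj] (l : ℝ) : Prop :=
  (∃ φ, G.IsLapEigenpair l φ) ∧ 0 < l ∧
    ∀ μ : ℝ, 0 < μ → (∃ ψ, G.IsLapEigenpair μ ψ) → l ≤ μ

section FiedlerAuxSection

open Finset

namespace FiedlerAux

variable {V : Type*} [Fintype V] [DecidableEq V] {G : SimpleGraph V} [DecidableRel G.Adj]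

set_option linter.unusedSectionVars false




/-- In a tree, every path realizes the distance. -/
lemma path_length_eq_dist (hT : G.IsTree) {x y : V} (p : G.Walk x y) (hp : p.IsPath) :
    p.length = G.dist x y := by
  obtain ⟨q, hq, hqlen⟩ := hT.isConnected.exists_path_of_dist x y
  have : (⟨p, hp⟩ : G.Path x y) = ⟨q, hq⟩ :=
    (SimpleGraph.isAcyclic_iff_path_unique.mp hT.IsAcyclic) _ _
  rw [← hqlen]
  exact congrArg SimpleGraph.Walk.length (congrArg Subtype.val this)

/-- Splitting a path in a tree at a support vertex. -/
lemma dist_add_dist_of_mem_support (hT : G.IsTree) {x y z : V} (p : G.Walk x y)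
    (hp : p.IsPath) (hz : z ∈ p.support) :
    G.dist x z + G.dist z y = G.dist x y := by
  have h1 := path_length_eq_dist hT _ (hp.takeUntil hz)
  have h2 := path_length_eq_dist hT _ (hp.dropUntil hz)
  have h3 := path_length_eq_dist hT p hp
  have := congrArg SimpleGraph.Walk.length (p.take_spec hz)
  rw [SimpleGraph.Walk.length_append] at this
  omega

/-- Gluing two paths whose supports meet only in the common endpoint. -/
lemma append_isPath {u v w : V} {p : G.Walk u v} {q : G.Walk v w}
    (hp : p.IsPath) (hq : q.IsPath)
    (h : ∀ z, z ∈ p.support → z ∈ q.support → z = v) : (p.append q).IsPath := by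
  rw [SimpleGraph.Walk.isPath_def, SimpleGraph.Walk.support_append]
  refine List.Nodup.append hp.support_nodup hq.support_nodup.tail ?_
  intro z hz1 hz2
  have hzq : z ∈ q.support := List.mem_of_mem_tail hz2
  have hzv : z = v := h z hz1 hzq
  subst hzv
  have hnd := hq.support_nodup
  rw [SimpleGraph.Walk.support_eq_cons q] at hnd
  exact (List.nodup_cons.mp hnd).1 hz2

/-- T0: along an edge of a tree, distance to any vertex changes by exactly one. -/
lemma dist_adj (hT : G.IsTree) {i j : V} (hij : G.Adj i j) (w : V) :
    G.dist w i = G.dist w j + 1 ∨ G.dist w j = G.dist w i + 1 := by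
  obtain ⟨q, hq, hqlen⟩ := hT.isConnected.exists_path_of_dist w j
  by_cases hi : i ∈ q.support
  · right
    have hsplit := dist_add_dist_of_mem_support hT q hq hi
    have : G.dist i j = 1 := SimpleGraph.dist_eq_one_iff_adj.mpr hij
    omega
  · left
    have hadj : G.Adj j i := hij.symm
    have hpath : (q.append (SimpleGraph.Walk.cons hadj SimpleGraph.Walk.nil)).IsPath := by
      apply append_isPath hq
      · rw [SimpleGraph.Walk.cons_isPath_iff]
        exact ⟨SimpleGraph.Walk.IsPath.nil, by simp [hij.ne']⟩
      · intro z hz1 hz2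
        simp only [SimpleGraph.Walk.support_cons, SimpleGraph.Walk.support_nil,
          List.mem_cons, List.mem_singleton] at hz2
        rcases hz2 with rfl | hz2 | hz2
        · rfl
        · subst hz2; exact absurd hz1 hi
        · exact absurd hz2 List.not_mem_nil
    have := path_length_eq_dist hT _ hpath
    rw [SimpleGraph.Walk.length_append] at this
    simp only [SimpleGraph.Walk.length_cons, SimpleGraph.Walk.length_nil] at this
    omega

/-- T1 : separation lemma. -/
lemma dist_edge_on_geodesic (hT : G.IsTree) {i j u0 uD : V} (hij : G.Adj i j)
    (h1 : G.dist u0 i = G.dist u0 j + 1) (h2 : G.dist uD j = G.dist uD i + 1) :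
    G.dist u0 j + G.dist j uD = G.dist u0 uD := by
  obtain ⟨p, hp, hplen⟩ := hT.isConnected.exists_path_of_dist u0 j
  obtain ⟨r, hr, hrlen⟩ := hT.isConnected.exists_path_of_dist uD i
  have hconn := hT.isConnected
  -- i is not on p
  have hip : i ∉ p.support := by
    intro hmem
    have := dist_add_dist_of_mem_support hT p hp hmem
    have hij1 : G.dist i j = 1 := SimpleGraph.dist_eq_one_iff_adj.mpr hij
    omega
  -- j is not on r
  have hjr : j ∉ r.support := by
    intro hmem
    have := dist_add_dist_of_mem_support hT r hr hmem
    have hji1 : G.dist j i = 1 := SimpleGraph.dist_eq_one_iff_adj.mpr hij.symm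
    omega
  -- supports of p and r are disjoint
  have hdisj : ∀ z, z ∈ p.support → z ∈ r.support → False := by
    intro z hz1 hz2
    have e1 := dist_add_dist_of_mem_support hT p hp hz1
    have e2 := dist_add_dist_of_mem_support hT r hr hz2
    have t1 : G.dist u0 i ≤ G.dist u0 z + G.dist z i := hconn.dist_triangle
    have t2 : G.dist uD j ≤ G.dist uD z + G.dist z j := hconn.dist_triangle
    have c1 : G.dist z j = G.dist j z := SimpleGraph.dist_comm
    have c2 : G.dist z i = G.dist i z := SimpleGraph.dist_comm
    omega
  -- build the path u0 → j → i → uD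
  have hq2 : (SimpleGraph.Walk.cons hij.symm r.reverse).IsPath := by
    rw [SimpleGraph.Walk.cons_isPath_iff]
    refine ⟨hr.reverse, ?_⟩
    rw [SimpleGraph.Walk.support_reverse, List.mem_reverse]
    exact hjr
  have hW : (p.append (SimpleGraph.Walk.cons hij.symm r.reverse)).IsPath := by
    apply append_isPath hp hq2
    intro z hz1 hz2
    simp only [SimpleGraph.Walk.support_cons, List.mem_cons] at hz2
    rcases hz2 with rfl | hz2
    · rfl
    · rw [SimpleGraph.Walk.support_reverse, List.mem_reverse] at hz2
      exact absurd (hdisj z hz1 hz2) (by simp)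
  have hWlen := path_length_eq_dist hT _ hW
  rw [SimpleGraph.Walk.length_append] at hWlen
  simp only [SimpleGraph.Walk.length_cons, SimpleGraph.Walk.length_reverse] at hWlen
  have c3 : G.dist j uD = G.dist uD j := SimpleGraph.dist_comm
  omega

/-- T2 : a vertex on the geodesic is determined by its distances to the endpoints. -/
lemma eq_of_dist_eq (hT : G.IsTree) {u0 uD x y : V}
    (hx1 : G.dist u0 x + G.dist x uD = G.dist u0 uD)
    (hy1 : G.dist u0 y + G.dist y uD = G.dist u0 uD)
    (hxy : G.dist u0 x = G.dist u0 y) : x = y := by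
  have hconn := hT.isConnected
  obtain ⟨p1, hp1, hl1⟩ := hconn.exists_path_of_dist u0 x
  obtain ⟨p2, hp2, hl2⟩ := hconn.exists_path_of_dist x uD
  -- p1 ++ p2 is a path
  have hP : (p1.append p2).IsPath := by
    apply append_isPath hp1 hp2
    intro z hz1 hz2
    have e1 := dist_add_dist_of_mem_support hT p1 hp1 hz1
    have e2 := dist_add_dist_of_mem_support hT p2 hp2 hz2
    have t : G.dist u0 uD ≤ G.dist u0 z + G.dist z uD := hconn.dist_triangle
    have c1 : G.dist z x = G.dist x z := SimpleGraph.dist_comm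
    have hzx : G.dist x z = 0 := by omega
    have := hconn.pos_dist_of_ne (u := x) (v := z)
    by_contra hne
    have := this (Ne.symm hne)
    omega
  -- y is on this path
  obtain ⟨q1, hq1, hm1⟩ := hconn.exists_path_of_dist u0 y
  obtain ⟨q2, hq2, hm2⟩ := hconn.exists_path_of_dist y uD
  have hQ : (q1.append q2).IsPath := by
    apply append_isPath hq1 hq2
    intro z hz1 hz2
    have e1 := dist_add_dist_of_mem_support hT q1 hq1 hz1
    have e2 := dist_add_dist_of_mem_support hT q2 hq2 hz2
    have t : G.dist u0 uD ≤ G.dist u0 z + G.dist z uD := hconn.dist_triangle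
    have c1 : G.dist z y = G.dist y z := SimpleGraph.dist_comm
    have hzy : G.dist y z = 0 := by omega
    have := hconn.pos_dist_of_ne (u := y) (v := z)
    by_contra hne
    have := this (Ne.symm hne)
    omega
  have hPQ : (⟨p1.append p2, hP⟩ : G.Path u0 uD) = ⟨q1.append q2, hQ⟩ :=
    (SimpleGraph.isAcyclic_iff_path_unique.mp hT.IsAcyclic) _ _
  have hyP : y ∈ (p1.append p2).support := by
    have : y ∈ (q1.append q2).support := by
      rw [SimpleGraph.Walk.mem_support_append_iff]
      left; exact q1.end_mem_support
    have hval : p1.append p2 = q1.append q2 := congrArg Subtype.val hPQ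
    rw [hval]
    exact this
  rw [SimpleGraph.Walk.mem_support_append_iff] at hyP
  rcases hyP with hy | hy
  · have := dist_add_dist_of_mem_support hT p1 hp1 hy
    have c1 : G.dist y x = G.dist x y := SimpleGraph.dist_comm
    have hd : G.dist x y = 0 := by omega
    by_contra hne
    have := hconn.pos_dist_of_ne hne
    omega
  · have := dist_add_dist_of_mem_support hT p2 hp2 hy
    have hd : G.dist x y = 0 := by omega
    by_contra hne
    have := hconn.pos_dist_of_ne hne
    omega

/-- distance to getVert along a walk. -/
lemma dist_getVert_le (hconn : G.Connected) {x y : V} (p : G.Walk x y) (m : ℕ) :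
    G.dist x (p.getVert m) ≤ m := by
  induction p generalizing m with
  | nil => simp [SimpleGraph.Walk.getVert, SimpleGraph.dist_self]
  | @cons a b c h q ih =>
    cases m with
    | zero => simp [SimpleGraph.Walk.getVert]
    | succ m =>
      have : G.dist a (q.getVert m) ≤ G.dist a b + G.dist b (q.getVert m) :=
        hconn.dist_triangle
      have hab : G.dist a b = 1 := SimpleGraph.dist_eq_one_iff_adj.mpr h
      have := ih m
      calc G.dist a ((SimpleGraph.Walk.cons h q).getVert (m+1)) =
          G.dist a (q.getVert m) := rfl
        _ ≤ m + 1 := by omega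

/-- there is a vertex at each distance along a geodesic. -/
lemma exists_vertex_on_geodesic (hconn : G.Connected) (u0 uD : V) (m : ℕ)
    (hm : m ≤ G.dist u0 uD) :
    ∃ x : V, G.dist u0 x = m ∧ G.dist x uD = G.dist u0 uD - m := by
  obtain ⟨p, hp, hplen⟩ := hconn.exists_path_of_dist u0 uD
  set D := G.dist u0 uD with hD
  refine ⟨p.getVert m, ?_, ?_⟩ <;>
  · have h1 : G.dist u0 (p.getVert m) ≤ m := dist_getVert_le hconn p m
    have h2 : G.dist (p.getVert m) uD ≤ D - m := by
      have := dist_getVert_le hconn p.reverse (D - m)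
      have hrev : p.reverse.getVert (D - m) = p.getVert m := by
        rw [SimpleGraph.Walk.getVert_reverse]
        congr 1
        omega
      rw [hrev] at this
      have : G.dist (p.getVert m) uD ≤ D - m := by
        rw [SimpleGraph.dist_comm]
        exact this
      exact this
    have ht : D ≤ G.dist u0 (p.getVert m) + G.dist (p.getVert m) uD :=
      hconn.dist_triangle
    omega




lemma l_le_rayleigh [Nonempty V] (hconn : G.Connected) {l : ℝ}
    (hl : G.IsSecondLapEigenvalue l) (f : V → ℝ) (hsum : ∑ v, f v = 0) :
    l * (∑ v, f v ^ 2) ≤ f ⬝ᵥ (G.lapMatrix ℝ *ᵥ f) := by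
  classical
  set A := G.lapMatrix ℝ with hA
  have hPSD : A.PosSemidef := SimpleGraph.posSemidef_lapMatrix ℝ G
  have hH : A.IsHermitian := hPSD.1
  set b := hH.eigenvectorBasis with hb
  set lam := hH.eigenvalues with hlam
  -- coefficients
  set F : EuclideanSpace ℝ V := WithLp.toLp 2 f with hF
  set c : V → ℝ := fun i => b.repr F i with hc
  have hcdot : ∀ i, c i = (b i : V → ℝ) ⬝ᵥ f := by
    intro i
    rw [hc]
    simp only [OrthonormalBasis.repr_apply_apply]
    rw [PiLp.inner_apply]
    simp [dotProduct]
    exact Finset.sum_congr rfl fun x _ => mul_comm _ _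
  -- each eigenvalue with nonzero coefficient is ≥ l
  have hkey : ∀ i, l * (c i)^2 ≤ lam i * (c i)^2 := by
    intro i
    rcases eq_or_ne (c i) 0 with h0 | h0
    · simp [h0]
    · have hnn : 0 ≤ lam i := hPSD.eigenvalues_nonneg i
      have hne : lam i ≠ 0 := by
        intro hzero
        -- eigenvector is constant, so c i = 0
        have hmv : A *ᵥ ⇑(b i) = 0 := by
          have := hH.mulVec_eigenvectorBasis i
          rw [← hlam, hzero, zero_smul] at this
          exact this
        have hconst := (G.lapMatrix_mulVec_eq_zero_iff_forall_reachable (x := ⇑(b i))).mp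
          hmv
        set v0 : V := Classical.arbitrary V
        have : c i = (b i : V → ℝ) v0 * ∑ v, f v := by
          rw [hcdot i, dotProduct, Finset.mul_sum]
          refine Finset.sum_congr rfl fun x _ => ?_
          exact congrArg (fun t => t * f x) (hconst x v0 (hconn.preconnected x v0))
        rw [hsum, mul_zero] at this
        exact h0 this
      have hpos : 0 < lam i := lt_of_le_of_ne hnn (Ne.symm hne)
      have hle : l ≤ lam i := by
        refine hl.2.2 (lam i) hpos ⟨⇑(b i), ?_, ?_⟩
        · intro hzero
          exact b.orthonormal.ne_zero i (by ext v; exact congrFun hzero v)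
        · exact hH.mulVec_eigenvectorBasis i
      have : 0 < (c i)^2 := by positivity
      nlinarith
  -- Parseval
  have hpar : ∑ i, (c i)^2 = ∑ v, f v ^ 2 := by
    have h := b.repr.inner_map_map F F
    rw [PiLp.inner_apply, PiLp.inner_apply] at h
    simp only [RCLike.inner_apply, starRingEnd_apply, star_trivial] at h
    calc ∑ i, (c i)^2 = ∑ i, (b.repr F i) * (b.repr F i) := by
          refine Finset.sum_congr rfl fun i _ => ?_; rw [hc]; ring
      _ = ∑ v, F v * F v := h
      _ = ∑ v, f v ^ 2 := by refine Finset.sum_congr rfl fun v _ => ?_; rw [hF]; ring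
  -- quadratic form
  have hquad : f ⬝ᵥ (A *ᵥ f) = ∑ i, lam i * (c i)^2 := by
    set Y : EuclideanSpace ℝ V := WithLp.toLp 2 (A *ᵥ f) with hY
    have hrepr : ∀ i, b.repr Y i = lam i * c i := by
      intro i
      have h1 : b.repr Y i = (b i : V → ℝ) ⬝ᵥ (A *ᵥ f) := by
        simp only [OrthonormalBasis.repr_apply_apply]
        rw [PiLp.inner_apply]
        simp [dotProduct, hY]
        exact Finset.sum_congr rfl fun x _ => mul_comm _ _
      have h2 : (b i : V → ℝ) ⬝ᵥ (A *ᵥ f) = (A *ᵥ ⇑(b i)) ⬝ᵥ f := by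
        rw [Matrix.dotProduct_mulVec]
        congr 1
        have hsymm : Aᵀ = A := G.isSymm_lapMatrix (R := ℝ)
        conv_lhs => rw [← hsymm]
        rw [Matrix.vecMul_transpose]
      rw [h1, h2, hH.mulVec_eigenvectorBasis i, smul_dotProduct]
      have h4 : (hH.eigenvectorBasis i : V → ℝ) ⬝ᵥ f = c i := (hcdot i).symm
      rw [smul_eq_mul]
      exact congrArg (fun t => lam i * t) h4
    have h3 : f ⬝ᵥ (A *ᵥ f) = ∑ i, (b.repr F i) * (b.repr Y i) := by
      have h := b.repr.inner_map_map F Y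
      rw [PiLp.inner_apply, PiLp.inner_apply] at h
      simp only [RCLike.inner_apply, starRingEnd_apply, star_trivial] at h
      rw [dotProduct]
      rw [show (∑ i, (b.repr F i) * (b.repr Y i)) = ∑ x, (b.repr Y) x * (b.repr F) x from
        Finset.sum_congr rfl fun _ _ => mul_comm _ _, h]
      exact Finset.sum_congr rfl fun _ _ => mul_comm _ _
    rw [h3]
    refine Finset.sum_congr rfl fun i _ => ?_
    rw [hrepr i]
    have h5 : b.repr F i = c i := rfl
    rw [h5]
    ring
  rw [hquad, ← hpar, Finset.mul_sum]
  exact Finset.sum_le_sum fun i _ => hkey i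





/-- Cauchy–Schwarz along a walk. -/
lemma walk_sq_le (φ : V → ℝ) {w u : V} (p : G.Walk w u) :
    (φ w - φ u)^2 ≤ p.length * ((p.darts.map fun d => (φ d.fst - φ d.snd)^2).sum) := by
  induction p with
  | nil => simp
  | @cons a b c h q ih =>
    have hQ : 0 ≤ ((q.darts.map fun d => (φ d.fst - φ d.snd)^2).sum) := by
      apply List.sum_nonneg
      intro x hx
      obtain ⟨d, _, rfl⟩ := List.mem_map.mp hx
      positivity
    set s : ℝ := φ b - φ c with hs
    set aa : ℝ := φ a - φ b with haa
    set n : ℝ := (q.length : ℝ) with hn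
    set Q : ℝ := ((q.darts.map fun d => (φ d.fst - φ d.snd)^2).sum) with hQdef
    have ihs : s^2 ≤ n * Q := ih
    have hn0 : 0 ≤ n := by positivity
    have goal : (aa + s)^2 ≤ (n + 1) * (aa^2 + Q) := by
      rcases eq_or_lt_of_le hn0 with hn1 | hn1
      · have hn2 : n = 0 := hn1.symm
        have hs0 : s = 0 := by nlinarith [sq_nonneg s]
        rw [hs0, hn2]
        nlinarith [hQ]
      · have key : n * ((n + 1) * (aa^2 + Q) - (aa + s)^2)
            = (n * aa - s)^2 + (n + 1) * (n * Q - s^2) := by ring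
        have h6 : 0 ≤ (n * aa - s)^2 + (n + 1) * (n * Q - s^2) :=
          add_nonneg (sq_nonneg _) (mul_nonneg (by linarith) (by linarith))
        have h7 : n * 0 ≤ n * ((n + 1) * (aa^2 + Q) - (aa + s)^2) := by
          rw [mul_zero]; rw [key]; exact h6
        have := le_of_mul_le_mul_left h7 hn1
        linarith
    calc (φ a - φ c)^2 = (aa + s)^2 := by rw [haa, hs]; ring_nf
      _ ≤ (n + 1) * (aa^2 + Q) := goal
      _ = ((SimpleGraph.Walk.cons h q).length : ℝ) *
          (((SimpleGraph.Walk.cons h q).darts.map fun d => (φ d.fst - φ d.snd)^2).sum) := by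
          simp only [SimpleGraph.Walk.darts_cons, SimpleGraph.Walk.length_cons,
            List.map_cons, List.sum_cons]
          push_cast
          ring

/-- The edge-energy of a path is at most the total energy. -/
lemma darts_sum_le (φ : V → ℝ) {w u : V} (p : G.Walk w u) (hp : p.IsPath) :
    ((p.darts.map fun d => (φ d.fst - φ d.snd)^2).sum) ≤
      (∑ i : V, ∑ j : V, if G.Adj i j then (φ i - φ j)^2 else 0) / 2 := by
  classical
  have hedges : p.edges.Nodup := hp.isTrail.edges_nodup
  have hdartsnd : p.darts.Nodup := by
    have : p.edges = p.darts.map SimpleGraph.Dart.edge := rfl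
    rw [this] at hedges
    exact hedges.of_map _
  have hinj : ∀ d1 ∈ p.darts, ∀ d2 ∈ p.darts, d1.edge = d2.edge → d1 = d2 := by
    have : p.edges = p.darts.map SimpleGraph.Dart.edge := rfl
    intro d1 h1 d2 h2 he
    exact List.inj_on_of_nodup_map (this ▸ hedges) h1 h2 he
  -- the list of ordered pairs
  set l1 : List (V × V) := p.darts.map SimpleGraph.Dart.toProd with hl1
  set l2 : List (V × V) := p.darts.map (fun d => d.toProd.swap) with hl2
  have hnd1 : l1.Nodup := hdartsnd.map SimpleGraph.Dart.toProd_injective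
  have hnd2 : l2.Nodup := hdartsnd.map (fun d1 d2 hh =>
    SimpleGraph.Dart.toProd_injective (Prod.swap_injective hh))
  have hdisj : ∀ z ∈ l1, z ∉ l2 := by
    intro z hz1 hz2
    obtain ⟨d1, hd1, rfl⟩ := List.mem_map.mp hz1
    obtain ⟨d2, hd2, hzz⟩ := List.mem_map.mp hz2
    have hedge : d1.edge = d2.edge := by
      have h1 : d1.toProd = d2.toProd.swap := hzz.symm
      unfold SimpleGraph.Dart.edge
      rw [h1]
      exact Sym2.mk_prod_swap_eq
    have := hinj d1 hd1 d2 hd2 hedge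
    subst this
    have : d1.toProd = d1.toProd.swap := hzz.symm
    have hne : d1.toProd.1 ≠ d1.toProd.2 := d1.adj.ne
    rw [Prod.ext_iff] at this
    exact hne (this.1.trans (by simp))
  set t : V × V → ℝ := fun z => (φ z.1 - φ z.2)^2 with ht
  -- list sums to finset sums
  have hsum1 : ((l1.map t).sum : ℝ) = ∑ z ∈ l1.toFinset, t z := by
    rw [List.sum_toFinset _ hnd1]
  have hsum2 : ((l2.map t).sum : ℝ) = ∑ z ∈ l2.toFinset, t z := by
    rw [List.sum_toFinset _ hnd2]
  have hteq : (l1.map t).sum = (l2.map t).sum := by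
    rw [hl1, hl2, List.map_map, List.map_map]
    congr 1
    refine List.map_congr_left fun d _ => ?_
    simp only [Function.comp_apply, ht, Prod.fst_swap, Prod.snd_swap]
    ring
  have horig : ((p.darts.map fun d => (φ d.fst - φ d.snd)^2).sum) = (l1.map t).sum := by
    rw [hl1, List.map_map]
    rfl
  -- total sum over adjacency pairs
  set S : Finset (V × V) := (univ ×ˢ univ).filter (fun z => G.Adj z.1 z.2) with hS
  have hsub : l1.toFinset ∪ l2.toFinset ⊆ S := by
    intro z hz
    rw [Finset.mem_union] at hz
    rw [hS, Finset.mem_filter]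
    refine ⟨Finset.mem_product.mpr ⟨Finset.mem_univ _, Finset.mem_univ _⟩, ?_⟩
    rcases hz with hz | hz
    · rw [List.mem_toFinset] at hz
      obtain ⟨d, _, rfl⟩ := List.mem_map.mp hz
      exact d.adj
    · rw [List.mem_toFinset] at hz
      obtain ⟨d, _, rfl⟩ := List.mem_map.mp hz
      exact d.adj.symm
  have hdisjf : Disjoint l1.toFinset l2.toFinset := by
    rw [Finset.disjoint_left]
    intro z hz1 hz2
    rw [List.mem_toFinset] at hz1 hz2
    exact hdisj z hz1 hz2
  have hSsum : ∑ z ∈ S, t z = ∑ i : V, ∑ j : V, if G.Adj i j then (φ i - φ j)^2 else 0 := by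
    rw [hS, Finset.sum_filter, Finset.sum_product]
  have hunion : ∑ z ∈ l1.toFinset ∪ l2.toFinset, t z ≤ ∑ z ∈ S, t z := by
    apply Finset.sum_le_sum_of_subset_of_nonneg hsub
    intro z _ _
    positivity
  rw [Finset.sum_union hdisjf] at hunion
  rw [horig]
  rw [hSsum] at hunion
  rw [← hsum1, ← hsum2] at hunion
  rw [← hteq] at hunion
  linarith



/-- The "descending" adjacent pairs along the `u0`–`uD` geodesic direction. -/
lemma card_plus_le (hT : G.IsTree) (u0 uD : V) :
    ((univ ×ˢ univ).filter fun z : V × V => G.Adj z.1 z.2 ∧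
        G.dist u0 z.1 = G.dist u0 z.2 + 1 ∧ G.dist uD z.2 = G.dist uD z.1 + 1).card
      ≤ G.dist u0 uD := by
  classical
  set D := G.dist u0 uD with hD
  have h := Finset.card_le_card_of_injOn
    (s := (univ ×ˢ univ).filter fun z : V × V => G.Adj z.1 z.2 ∧
        G.dist u0 z.1 = G.dist u0 z.2 + 1 ∧ G.dist uD z.2 = G.dist uD z.1 + 1)
    (t := Finset.range D) (f := fun z : V × V => G.dist u0 z.2) ?_ ?_
  · simpa using h
  · intro z hz
    rw [Finset.mem_coe, Finset.mem_filter] at hz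
    obtain ⟨-, hadj, h1, h2⟩ := hz
    have hgeo := dist_edge_on_geodesic hT hadj h1 h2
    have hz2 : z.2 ≠ uD := by
      intro h
      rw [h] at h2
      simp [SimpleGraph.dist_self] at h2
    have hpos : 0 < G.dist z.2 uD := by
      rw [SimpleGraph.dist_comm]
      have := hT.isConnected.pos_dist_of_ne (Ne.symm hz2)
      omega
    rw [Finset.mem_coe, Finset.mem_range]
    show G.dist u0 z.2 < D
    omega
  · intro z hz z' hz' heq0
    have heq : G.dist u0 z.2 = G.dist u0 z'.2 := heq0
    simp only [Finset.coe_filter, Set.mem_setOf_eq] at hz hz'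
    obtain ⟨-, hadj, h1, h2⟩ := hz
    obtain ⟨-, hadj', h1', h2'⟩ := hz'
    have hgeo := dist_edge_on_geodesic hT hadj h1 h2
    have hgeo' := dist_edge_on_geodesic hT hadj' h1' h2'
    have hsnd : z.2 = z'.2 := eq_of_dist_eq hT hgeo hgeo' heq
    have hfst : z.1 = z'.1 := by
      apply eq_of_dist_eq hT (u0 := u0) (uD := uD)
      · have c1 : G.dist z.1 uD = G.dist uD z.1 := SimpleGraph.dist_comm
        have c2 : G.dist z.2 uD = G.dist uD z.2 := SimpleGraph.dist_comm
        omega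
      · have c1 : G.dist z'.1 uD = G.dist uD z'.1 := SimpleGraph.dist_comm
        have c2 : G.dist z'.2 uD = G.dist uD z'.2 := SimpleGraph.dist_comm
        omega
      · omega
    exact Prod.ext hfst hsnd

/-- Energy of the test function is at most `8 D`. -/
lemma test_energy_le (hT : G.IsTree) (u0 uD : V) :
    (∑ i : V, ∑ j : V, if G.Adj i j then
        (((G.dist u0 i : ℝ) - (G.dist uD i : ℝ)) - ((G.dist u0 j : ℝ) - (G.dist uD j : ℝ)))^2
      else 0)
      ≤ 8 * (G.dist u0 uD : ℝ) := by
  classical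
  set D := G.dist u0 uD with hD
  set g : V → ℝ := fun v => (G.dist u0 v : ℝ) - (G.dist uD v : ℝ) with hg
  set t : V × V → ℝ := fun z => (g z.1 - g z.2)^2 with ht
  set Sp : Finset (V × V) := (univ ×ˢ univ).filter (fun z : V × V => G.Adj z.1 z.2 ∧
        G.dist u0 z.1 = G.dist u0 z.2 + 1 ∧ G.dist uD z.2 = G.dist uD z.1 + 1) with hSp
  set Sm : Finset (V × V) := (univ ×ˢ univ).filter (fun z : V × V => G.Adj z.1 z.2 ∧
        G.dist u0 z.2 = G.dist u0 z.1 + 1 ∧ G.dist uD z.1 = G.dist uD z.2 + 1) with hSm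
  have hLHS : (∑ i : V, ∑ j : V, if G.Adj i j then
        (((G.dist u0 i : ℝ) - (G.dist uD i : ℝ)) - ((G.dist u0 j : ℝ) - (G.dist uD j : ℝ)))^2
      else 0) = ∑ z ∈ (univ ×ˢ univ), (if G.Adj z.1 z.2 then t z else 0) := by
    rw [Finset.sum_product]
  rw [hLHS]
  have hsub : ∑ z ∈ (univ ×ˢ univ), (if G.Adj z.1 z.2 then t z else 0)
      = ∑ z ∈ Sp ∪ Sm, (if G.Adj z.1 z.2 then t z else 0) := by
    symm
    apply Finset.sum_subset
    · intro z hz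
      exact Finset.mem_product.mpr ⟨Finset.mem_univ _, Finset.mem_univ _⟩
    · intro z _ hzn
      by_cases hadj : G.Adj z.1 z.2
      · rw [if_pos hadj]
        -- both distance differences go the same way, so t z = 0
        rcases dist_adj hT hadj u0 with h1 | h1 <;>
          rcases dist_adj hT hadj uD with h2 | h2
        · rw [ht, hg]
          simp only
          rw [h1, h2]; push_cast; ring
        · exfalso
          apply hzn
          rw [Finset.mem_union, hSp]
          left
          rw [Finset.mem_filter]
          exact ⟨Finset.mem_product.mpr ⟨Finset.mem_univ _, Finset.mem_univ _⟩, hadj, h1, h2⟩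
        · exfalso
          apply hzn
          rw [Finset.mem_union, hSm]
          right
          rw [Finset.mem_filter]
          exact ⟨Finset.mem_product.mpr ⟨Finset.mem_univ _, Finset.mem_univ _⟩, hadj, h1, h2⟩
        · rw [ht, hg]
          simp only
          rw [h1, h2]; push_cast; ring
      · rw [if_neg hadj]
  rw [hsub]
  have hbound : ∀ z ∈ Sp ∪ Sm, (if G.Adj z.1 z.2 then t z else 0) ≤ 4 := by
    intro z hz
    rw [Finset.mem_union] at hz
    have hcases : (G.dist u0 z.1 = G.dist u0 z.2 + 1 ∧ G.dist uD z.2 = G.dist uD z.1 + 1) ∨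
        (G.dist u0 z.2 = G.dist u0 z.1 + 1 ∧ G.dist uD z.1 = G.dist uD z.2 + 1) := by
      rcases hz with hz | hz
      · left; rw [hSp, Finset.mem_filter] at hz; exact ⟨hz.2.2.1, hz.2.2.2⟩
      · right; rw [hSm, Finset.mem_filter] at hz; exact ⟨hz.2.2.1, hz.2.2.2⟩
    have htz : t z ≤ 4 := by
      rcases hcases with ⟨h1, h2⟩ | ⟨h1, h2⟩ <;>
      · rw [ht, hg]
        simp only
        rw [h1, h2]; push_cast; nlinarith [sq_nonneg ((1:ℝ))]
    split_ifs
    · exact htz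
    · norm_num
  have hcardm : Sm.card ≤ D := by
    have : Sm.card ≤ Sp.card := by
      apply Finset.card_le_card_of_injOn (f := Prod.swap)
      · intro z hz
        rw [hSm, Finset.mem_coe, Finset.mem_filter] at hz
        rw [hSp, Finset.mem_coe, Finset.mem_filter]
        exact ⟨Finset.mem_product.mpr ⟨Finset.mem_univ _, Finset.mem_univ _⟩,
          hz.2.1.symm, hz.2.2.1, hz.2.2.2⟩
      · intro a _ b _ h
        exact Prod.swap_injective h
    have := card_plus_le hT u0 uD
    rw [← hSp] at this
    omega
  have hcardp : Sp.card ≤ D := by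
    have := card_plus_le hT u0 uD
    rw [← hSp] at this
    exact this
  calc ∑ z ∈ Sp ∪ Sm, (if G.Adj z.1 z.2 then t z else 0)
      ≤ (Sp ∪ Sm).card • (4:ℝ) := Finset.sum_le_card_nsmul _ _ _ hbound
    _ = ((Sp ∪ Sm).card : ℝ) * 4 := by rw [nsmul_eq_mul]
    _ ≤ ((Sp.card + Sm.card : ℕ) : ℝ) * 4 := by
        have := Finset.card_union_le Sp Sm
        have h4 : (0:ℝ) ≤ 4 := by norm_num
        apply mul_le_mul_of_nonneg_right _ h4
        exact_mod_cast this
    _ ≤ 8 * (D : ℝ) := by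
        have : Sp.card + Sm.card ≤ 2 * D := by omega
        have h := (Nat.cast_le (α := ℝ)).mpr this
        push_cast at h ⊢
        linarith



lemma sum_range_cast (n : ℕ) : ∑ m ∈ range n, (m:ℝ) = n*(n-1)/2 := by
  induction n with
  | zero => simp
  | succ k ih => rw [Finset.sum_range_succ, ih]; push_cast; ring

lemma sum_range_sq_cast (n : ℕ) : ∑ m ∈ range n, (m:ℝ)^2 = n*(n-1)*(2*n-1)/6 := by
  induction n with
  | zero => simp
  | succ k ih => rw [Finset.sum_range_succ, ih]; push_cast; ring

lemma sum_centered_sq (n : ℕ) (μ : ℝ) :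
    (n:ℝ)^3/3 ≤ ∑ m ∈ range (n+1), ((2*(m:ℝ) - n) - μ)^2 := by
  have hexp : ∀ m : ℕ, ((2*(m:ℝ) - n) - μ)^2
      = 4*(m:ℝ)^2 - (4*(n:ℝ)+4*μ)*(m:ℝ) + ((n:ℝ)+μ)^2 := by intro m; ring
  have h1 := sum_range_cast (n+1)
  have h2 := sum_range_sq_cast (n+1)
  have : ∑ m ∈ range (n+1), ((2*(m:ℝ) - n) - μ)^2
      = 4*(∑ m ∈ range (n+1), (m:ℝ)^2) - (4*(n:ℝ)+4*μ)*(∑ m ∈ range (n+1), (m:ℝ))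
        + (n+1)*((n:ℝ)+μ)^2 := by
    rw [Finset.mul_sum, Finset.mul_sum, ← Finset.sum_sub_distrib]
    have hconst : (↑n + 1) * ((n:ℝ) + μ)^2 = ∑ _m ∈ range (n+1), ((n:ℝ)+μ)^2 := by
      rw [Finset.sum_const, Finset.card_range, nsmul_eq_mul]; push_cast; ring
    rw [hconst, ← Finset.sum_add_distrib]
    exact Finset.sum_congr rfl fun m _ => by rw [hexp m]
  rw [this, h1, h2]
  push_cast
  nlinarith [sq_nonneg μ, Nat.cast_nonneg (α := ℝ) n, sq_nonneg ((n:ℝ)*μ), mul_nonneg (Nat.cast_nonneg (α := ℝ) n) (sq_nonneg μ)]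


end FiedlerAux

end FiedlerAuxSection

set_option maxHeartbeats 1000000 in
open Finset in
/-- For a finite tree on at least two vertices, a unit Fiedler vector `φ` satisfies
`Σ_v |φ(v)| ≥ diam(G)^{1/2} / 4`. -/
theorem sum_abs_fiedler_ge_sqrt_diam_div_four {V : Type*} [Fintype V] [DecidableEq V]
    (G : SimpleGraph V) [DecidableRel G.Adj] (hT : G.IsTree) (hcard : 2 ≤ Fintype.card V)
    (l : ℝ) (hl : G.IsSecondLapEigenvalue l) (φ : V → ℝ)
    (hpair : G.IsLapEigenpair l φ) (hnorm : ∑ v : V, φ v ^ 2 = 1) :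
    Real.sqrt (G.diam : ℝ) / 4 ≤ ∑ v : V, |φ v| := by
  classical
  have hconn := hT.isConnected
  have hnonempty : Nonempty V := Fintype.card_pos_iff.mp (by omega)
  have hediam : G.ediam ≠ ⊤ := by
    obtain ⟨u, v, huv⟩ := G.exists_edist_eq_ediam_of_finite
    rw [← huv]
    exact SimpleGraph.edist_ne_top_iff_reachable.mpr (hconn.preconnected u v)
  obtain ⟨u0, uD, hdiam⟩ := G.exists_dist_eq_diam
  set D : ℕ := G.diam with hDdef
  have hD1 : 1 ≤ D := by
    obtain ⟨a, b, hab⟩ := Fintype.exists_pair_of_one_lt_card (by omega : 1 < Fintype.card V)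
    have h1 := hconn.pos_dist_of_ne hab
    have h2 := G.dist_le_diam hediam (u := a) (v := b)
    omega
  have hDR : (0:ℝ) < (D:ℝ) := by exact_mod_cast hD1
  have hl0 : 0 < l := hl.2.1
  -- the test function
  set g : V → ℝ := fun v => (G.dist u0 v : ℝ) - (G.dist uD v : ℝ) with hg
  set μ : ℝ := (∑ v : V, g v) / (Fintype.card V : ℝ) with hμ
  set f : V → ℝ := fun v => g v - μ with hf
  have hcardR : (0:ℝ) < (Fintype.card V : ℝ) := by
    have := Fintype.card_pos_iff.mpr hnonempty
    exact_mod_cast this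
  have hfsum : ∑ v : V, f v = 0 := by
    simp only [hf]
    rw [Finset.sum_sub_distrib, Finset.sum_const, Finset.card_univ, nsmul_eq_mul, hμ]
    field_simp
    simp
  have hray := FiedlerAux.l_le_rayleigh hconn hl f hfsum
  have hquadf : f ⬝ᵥ (G.lapMatrix ℝ *ᵥ f)
      = (∑ i : V, ∑ j : V, if G.Adj i j then (f i - f j)^2 else 0) / 2 := by
    rw [← Matrix.toLinearMap₂'_apply', SimpleGraph.lapMatrix_toLinearMap₂']
  have hfg : ∀ i j : V, f i - f j = g i - g j := fun i j => by simp only [hf]; ring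
  have henergy : (∑ i : V, ∑ j : V, if G.Adj i j then (f i - f j)^2 else 0)
      ≤ 8 * (D:ℝ) := by
    have heq : (∑ i : V, ∑ j : V, if G.Adj i j then (f i - f j)^2 else 0)
        = (∑ i : V, ∑ j : V, if G.Adj i j then
            (((G.dist u0 i : ℝ) - (G.dist uD i : ℝ))
              - ((G.dist u0 j : ℝ) - (G.dist uD j : ℝ)))^2 else 0) := by
      refine Finset.sum_congr rfl fun i _ => Finset.sum_congr rfl fun j _ => ?_
      by_cases h : G.Adj i j
      · rw [if_pos h, if_pos h, hfg i j]
      · rw [if_neg h, if_neg h]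
    rw [heq]
    have h2 := FiedlerAux.test_energy_le hT u0 uD
    rw [hdiam] at h2
    exact h2
  -- variance lower bound
  have hvar : (D:ℝ)^3/3 ≤ ∑ v : V, f v ^ 2 := by
    set X : ℕ → V := fun m => if h : m ≤ G.dist u0 uD then
        Classical.choose (FiedlerAux.exists_vertex_on_geodesic hconn u0 uD m h)
      else Classical.arbitrary V with hX
    have hXspec : ∀ m, ∀ hm : m ≤ G.dist u0 uD,
        G.dist u0 (X m) = m ∧ G.dist (X m) uD = G.dist u0 uD - m := by
      intro m hm
      simp only [hX, dif_pos hm]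
      exact Classical.choose_spec (FiedlerAux.exists_vertex_on_geodesic hconn u0 uD m hm)
    have hXinj : ∀ m ∈ Finset.range (D+1), ∀ m' ∈ Finset.range (D+1),
        X m = X m' → m = m' := by
      intro m hm m' hm' heq
      rw [Finset.mem_range] at hm hm'
      have h1 := (hXspec m (by omega : m ≤ G.dist u0 uD)).1
      have h2 := (hXspec m' (by omega : m' ≤ G.dist u0 uD)).1
      rw [heq] at h1
      omega
    have himage : ∑ m ∈ Finset.range (D+1), f (X m)^2 ≤ ∑ v : V, f v^2 := by
      have himg : ∑ v ∈ (Finset.range (D+1)).image X, f v^2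
          = ∑ m ∈ Finset.range (D+1), f (X m)^2 := Finset.sum_image hXinj
      rw [← himg]
      apply Finset.sum_le_sum_of_subset_of_nonneg (Finset.subset_univ _)
      intro v _ _
      positivity
    have hfX : ∀ m ∈ Finset.range (D+1), f (X m)^2 = ((2*(m:ℝ) - D) - μ)^2 := by
      intro m hm
      rw [Finset.mem_range] at hm
      have hm' : m ≤ G.dist u0 uD := by omega
      obtain ⟨ha, hb⟩ := hXspec m hm'
      have hc : G.dist uD (X m) = G.dist u0 uD - m := by
        rw [SimpleGraph.dist_comm]; exact hb
      have hfx : f (X m) = (2*(m:ℝ) - D) - μ := by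
        simp only [hf, hg]
        rw [ha, hc, hdiam]
        have hcast : ((D - m : ℕ) : ℝ) = (D:ℝ) - (m:ℝ) := by
          have : m ≤ D := by omega
          push_cast [Nat.cast_sub this]
          ring
        rw [hcast]
        ring
      rw [hfx]
    calc (D:ℝ)^3/3 ≤ ∑ m ∈ Finset.range (D+1), ((2*(m:ℝ) - D) - μ)^2 :=
          FiedlerAux.sum_centered_sq D μ
      _ = ∑ m ∈ Finset.range (D+1), f (X m)^2 := (Finset.sum_congr rfl hfX).symm
      _ ≤ ∑ v : V, f v^2 := himage
  -- eigenvalue upper bound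
  have hfL : f ⬝ᵥ (G.lapMatrix ℝ *ᵥ f) ≤ 4 * (D:ℝ) := by
    rw [hquadf]; linarith [henergy]
  have hlD : l ≤ 12 / (D:ℝ)^2 := by
    have h1 : l * ((D:ℝ)^3/3) ≤ 4*(D:ℝ) :=
      le_trans (mul_le_mul_of_nonneg_left hvar (le_of_lt hl0)) (le_trans hray hfL)
    rw [le_div_iff₀ (by positivity)]
    nlinarith [hDR, h1]
  -- properties of the eigenvector
  obtain ⟨hφ0, hφeq⟩ := hpair
  have hQφ : φ ⬝ᵥ (G.lapMatrix ℝ *ᵥ φ) = l := by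
    rw [hφeq, dotProduct_smul, smul_eq_mul]
    have hpp : φ ⬝ᵥ φ = ∑ v : V, φ v ^ 2 := by
      rw [dotProduct]
      exact Finset.sum_congr rfl fun v _ => (sq (φ v)).symm
    rw [hpp, hnorm, mul_one]
  have hsumφ : ∑ v : V, φ v = 0 := by
    have hrow : ∀ v : V, ∑ u : V, G.lapMatrix ℝ v u = 0 := by
      intro v
      have h := congrFun (G.lapMatrix_mulVec_const_eq_zero (R := ℝ)) v
      simpa [Matrix.mulVec, dotProduct] using h
    have hLsum : ∑ v : V, (G.lapMatrix ℝ *ᵥ φ) v = 0 := by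
      simp only [Matrix.mulVec, dotProduct]
      rw [Finset.sum_comm]
      apply Finset.sum_eq_zero
      intro u _
      have hcol : ∑ v : V, G.lapMatrix ℝ v u = 0 := by
        have hsymm : (G.lapMatrix ℝ)ᵀ = G.lapMatrix ℝ := G.isSymm_lapMatrix (R := ℝ)
        calc ∑ v : V, G.lapMatrix ℝ v u = ∑ v : V, G.lapMatrix ℝ u v := by
              refine Finset.sum_congr rfl fun v _ => ?_
              conv_lhs => rw [← hsymm]
              rw [Matrix.transpose_apply]
          _ = 0 := hrow u
      rw [← Finset.sum_mul, hcol, zero_mul]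
    rw [hφeq] at hLsum
    simp only [Pi.smul_apply, smul_eq_mul] at hLsum
    rw [← Finset.mul_sum] at hLsum
    rcases mul_eq_zero.mp hLsum with h | h
    · exact absurd h (ne_of_gt hl0)
    · exact h
  -- the maximal entry
  obtain ⟨w, -, hwmax⟩ := Finset.exists_max_image (Finset.univ : Finset V)
    (fun v => |φ v|) ⟨Classical.arbitrary V, Finset.mem_univ _⟩
  set M : ℝ := |φ w| with hM
  have hMnn : 0 ≤ M := abs_nonneg _
  have hMpos : 0 < M := by
    rcases eq_or_lt_of_le hMnn with h0 | h0
    · exfalso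
      have hall : ∀ v : V, φ v = 0 := by
        intro v
        have h := hwmax v (Finset.mem_univ v)
        rw [← h0] at h
        exact abs_eq_zero.mp (le_antisymm h (abs_nonneg _))
      have hz : ∑ v : V, φ v^2 = 0 :=
        Finset.sum_eq_zero fun v _ => by rw [hall v]; ring
      rw [hnorm] at hz; norm_num at hz
    · exact h0
  set S : ℝ := ∑ v : V, |φ v| with hS
  have hS0 : 0 ≤ S := Finset.sum_nonneg fun v _ => abs_nonneg _
  have h1S : 1 ≤ M * S := by
    calc (1:ℝ) = ∑ v : V, φ v ^ 2 := hnorm.symm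
      _ ≤ ∑ v : V, M * |φ v| := by
          refine Finset.sum_le_sum fun v _ => ?_
          have h := hwmax v (Finset.mem_univ v)
          calc φ v^2 = |φ v| * |φ v| := by rw [← sq_abs (φ v), sq]
            _ ≤ M * |φ v| := mul_le_mul_of_nonneg_right h (abs_nonneg _)
      _ = M * S := by rw [hS, Finset.mul_sum]
  have hwne : φ w ≠ 0 := by
    intro h
    rw [hM, h, abs_zero] at hMpos
    exact lt_irrefl _ hMpos
  have hex : ∃ u : V, φ u * φ w ≤ 0 := by
    by_contra hcon
    push_neg at hcon
    rcases lt_or_gt_of_ne hwne with hneg | hpos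
    · have hall : ∀ u : V, φ u < 0 := fun u => by nlinarith [hcon u]
      have hs : 0 < ∑ v : V, (-(φ v)) :=
        Finset.sum_pos (fun v _ => by linarith [hall v])
          ⟨Classical.arbitrary V, Finset.mem_univ _⟩
      rw [Finset.sum_neg_distrib] at hs
      rw [hsumφ] at hs
      norm_num at hs
    · have hall : ∀ u : V, 0 < φ u := fun u => by nlinarith [hcon u]
      have hs : 0 < ∑ v : V, φ v :=
        Finset.sum_pos (fun v _ => hall v) ⟨Classical.arbitrary V, Finset.mem_univ _⟩
      rw [hsumφ] at hs
      norm_num at hs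
  obtain ⟨u, hu⟩ := hex
  have hM2 : M^2 ≤ (φ w - φ u)^2 := by
    have h1 : M^2 = φ w^2 := by rw [hM, sq_abs]
    nlinarith [sq_nonneg (φ u), hu]
  obtain ⟨p, hp, hplen⟩ := hconn.exists_path_of_dist w u
  have h8a := FiedlerAux.walk_sq_le φ p
  have h8b := FiedlerAux.darts_sum_le φ p hp
  have hQhalf : (∑ i : V, ∑ j : V, if G.Adj i j then (φ i - φ j)^2 else 0) / 2 = l := by
    rw [← SimpleGraph.lapMatrix_toLinearMap₂', Matrix.toLinearMap₂'_apply']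
    exact hQφ
  have hdarts0 : 0 ≤ ((p.darts.map fun d => (φ d.fst - φ d.snd)^2).sum) := by
    apply List.sum_nonneg
    intro x hx
    obtain ⟨d, -, rfl⟩ := List.mem_map.mp hx
    positivity
  have hplenD : (p.length : ℝ) ≤ (D:ℝ) := by
    have h1 : G.dist w u ≤ D := G.dist_le_diam hediam
    rw [hplen]
    exact_mod_cast h1
  have hM2b : M^2 ≤ (D:ℝ) * l := by
    have hdsl : ((p.darts.map fun d => (φ d.fst - φ d.snd)^2).sum) ≤ l := by
      rw [← hQhalf]; exact h8b
    calc M^2 ≤ (φ w - φ u)^2 := hM2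
      _ ≤ p.length * ((p.darts.map fun d => (φ d.fst - φ d.snd)^2).sum) := h8a
      _ ≤ (D:ℝ) * l := by
          apply mul_le_mul hplenD hdsl hdarts0 (le_of_lt hDR)
  have hM2c : M^2 ≤ 12 / (D:ℝ) := by
    have h2 : (D:ℝ) * l ≤ (D:ℝ) * (12 / (D:ℝ)^2) :=
      mul_le_mul_of_nonneg_left hlD (le_of_lt hDR)
    have heq2 : (D:ℝ) * (12/(D:ℝ)^2) = 12/(D:ℝ) := by
      field_simp
    linarith [hM2b]
  have hS2 : (D:ℝ) ≤ 16 * S^2 := by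
    have h3 : 1 ≤ M^2 * S^2 := by
      have hprod := mul_le_mul h1S h1S zero_le_one (mul_nonneg hMnn hS0)
      nlinarith [hprod]
    have h4 : 1 ≤ (12/(D:ℝ)) * S^2 := by
      have hstep : M^2 * S^2 ≤ (12/(D:ℝ)) * S^2 :=
        mul_le_mul_of_nonneg_right hM2c (sq_nonneg S)
      linarith
    have h5 : (D:ℝ) ≤ 12 * S^2 := by
      have h6 := mul_le_mul_of_nonneg_left h4 (le_of_lt hDR)
      have h7 : (D:ℝ) * ((12/(D:ℝ)) * S^2) = 12 * S^2 := by
        field_simp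
      rw [h7, mul_one] at h6
      exact h6
    nlinarith [h5, sq_nonneg S]
  have hsqrt : Real.sqrt (D:ℝ) ≤ 4 * S := by
    have h6 : Real.sqrt (D:ℝ) ≤ Real.sqrt (16 * S^2) := Real.sqrt_le_sqrt hS2
    have h7 : Real.sqrt (16*S^2) = 4*S := by
      rw [show (16:ℝ)*S^2 = (4*S)^2 by ring]
      exact Real.sqrt_sq (by positivity)
    rw [h7] at h6
    exact h6
  rw [hS]
  linarith [hsqrt]
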